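/- Let P₁,...,P_k be symmetric Markov chains, each with simple eigenvalues and all eigenvectors being multiples of ±1 vectors (i.e., each is average uniform mixing for the continuous walk). If for each choice of eigenvalues λ(j) ∈ Spec(P_j) the products Π_j λ(j) are pairwise distinct, then the tensor product P₁ ⊗ ... ⊗ P_k also has simple eigenvalues with all eigenvectors multiples of ±1 vectors, and hence its continuous quantum walk is average uniform mixing. -/

import Mathlib

open Matrix BigOperators

/-- A symmetric matrix has "simple eigenvalues with all eigenvectors multiples of
`±1` vectors": every eigenspace is one-dimensional and every eigenvector is a
scalar multiple of a vector with all entries `+1` or `−1`.  By the characterization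
of average uniform mixing, this is equivalent to the continuous quantum walk on the
matrix being average uniform mixing. -/
def SimpleFlatSpectrum {ι : Type*} [Fintype ι] [DecidableEq ι]
    (A : Matrix ι ι ℝ) : Prop :=
  (∀ (μ : ℝ) (v w : ι → ℝ), v ≠ 0 → A.mulVec v = μ • v → A.mulVec w = μ • w →
      ∃ c : ℝ, w = c • v) ∧
  (∀ (μ : ℝ) (v : ι → ℝ), v ≠ 0 → A.mulVec v = μ • v →
      ∃ (c : ℝ) (s : ι → ℝ), (∀ i, s i = 1 ∨ s i = -1) ∧ v = c • s)

/-- If each symmetric Markov chain `P_1,...,P_k` has simple eigenvalues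
with all eigenvectors multiples of `±1` vectors (i.e. each is average uniform mixing
for the continuous walk), and all products of choices of eigenvalues, one from each
`P_j`, are pairwise distinct, then the tensor product `P_1 ⊗ ... ⊗ P_k` also has
simple eigenvalues with all eigenvectors multiples of `±1` vectors (hence its
continuous quantum walk is average uniform mixing). -/
theorem tensor_product_average_uniform_mixing
    (k : ℕ) (nsz : Fin k → ℕ)
    (P : ∀ i, Matrix (Fin (nsz i)) (Fin (nsz i)) ℝ)
    (hsymm : ∀ i, (P i)ᵀ = P i)
    (hnonneg : ∀ i x y, 0 ≤ P i x y)
    (hstoch : ∀ i x, ∑ y, P i x y = 1)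
    (hmix : ∀ i, SimpleFlatSpectrum (P i))
    (hdistinct : ∀ μ ν : (i : Fin k) → ℝ,
      (∀ i, ∃ v : Fin (nsz i) → ℝ, v ≠ 0 ∧ (P i).mulVec v = μ i • v) →
      (∀ i, ∃ v : Fin (nsz i) → ℝ, v ≠ 0 ∧ (P i).mulVec v = ν i • v) →
      ∏ i, μ i = ∏ i, ν i → μ = ν) :
    SimpleFlatSpectrum
      (Matrix.of fun x y : (i : Fin k) → Fin (nsz i) => ∏ i, P i (x i) (y i)) := by
  set ιT := (i : Fin k) → Fin (nsz i) with hιT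
  set A : Matrix ιT ιT ℝ :=
    Matrix.of fun x y : ιT => ∏ i, P i (x i) (y i) with hA
  -- trivial case: empty index type
  rcases isEmpty_or_nonempty ιT with hE | hNE
  · constructor
    · intro μ v w hv _ _
      exact absurd (Subsingleton.elim v 0) hv
    · intro μ v hv _
      exact absurd (Subsingleton.elim v 0) hv
  -- Hermitian structure on each factor
  have hherm : ∀ i, (P i).IsHermitian := fun i => by
    unfold Matrix.IsHermitian
    rw [conjTranspose_eq_transpose_of_trivial]; exact hsymm i
  set u : ∀ i, Fin (nsz i) → (Fin (nsz i) → ℝ) :=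
    fun i j => (hherm i).eigenvectorBasis j with hu
  set lam : ∀ i, Fin (nsz i) → ℝ := fun i => (hherm i).eigenvalues with hlam
  have hu_eig : ∀ i j, (P i).mulVec (u i j) = lam i j • u i j := fun i j =>
    (hherm i).mulVec_eigenvectorBasis j
  have hu_ne : ∀ i j, u i j ≠ 0 := fun i j h =>
    (hherm i).eigenvectorBasis.orthonormal.ne_zero j (by ext x; simpa using congrFun h x)
  -- eigenvalues within each factor are distinct
  have hlaminj : ∀ i, Function.Injective (lam i) := by
    intro i j j' h
    by_contra hne
    obtain ⟨c, hc⟩ := (hmix i).1 (lam i j) (u i j) (u i j') (hu_ne i j) (hu_eig i j)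
      (by rw [h]; exact hu_eig i j')
    have horth : (inner ℝ ((hherm i).eigenvectorBasis j) ((hherm i).eigenvectorBasis j') : ℝ) = 0 :=
      (hherm i).eigenvectorBasis.orthonormal.2 hne
    have hveq : (hherm i).eigenvectorBasis j' = c • (hherm i).eigenvectorBasis j := by
      ext x; exact congrFun hc x
    rw [hveq, real_inner_smul_right, real_inner_self_eq_norm_sq,
      (hherm i).eigenvectorBasis.orthonormal.1 j] at horth
    simp at horth
    exact hu_ne i j' (by rw [hc, horth, zero_smul])
  -- tensor eigenvectors and eigenvalues
  set U : ιT → (ιT → ℝ) := fun f x => ∏ i, u i (f i) (x i) with hU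
  set Lam : ιT → ℝ := fun f => ∏ i, lam i (f i) with hLam
  have hU_eig : ∀ f, A.mulVec (U f) = Lam f • U f := by
    intro f
    funext x
    have : A.mulVec (U f) x = ∑ y : ιT, ∏ i, (P i (x i) (y i) * u i (f i) (y i)) := by
      simp only [Matrix.mulVec, dotProduct, hA, Matrix.of_apply, hU]
      exact Finset.sum_congr rfl fun y _ => by rw [← Finset.prod_mul_distrib]
    rw [this, ← Fintype.prod_sum (fun i j => P i (x i) j * u i (f i) j)]
    have : ∀ i, ∑ j, P i (x i) j * u i (f i) j = lam i (f i) * u i (f i) (x i) := by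
      intro i
      have := congrFun (hu_eig i (f i)) (x i)
      simpa [Matrix.mulVec, dotProduct] using this
    rw [Finset.prod_congr rfl fun i _ => this i, Finset.prod_mul_distrib]
    simp [hLam, hU]
  have hU_ne : ∀ f, U f ≠ 0 := by
    intro f h
    have hx : ∀ i, ∃ xi, u i (f i) xi ≠ 0 := by
      intro i
      by_contra hcon
      push_neg at hcon
      exact hu_ne i (f i) (funext hcon)
    choose x hxne using hx
    have := congrFun h x
    simp only [hU, Pi.zero_apply] at this
    exact (Finset.prod_ne_zero_iff.2 fun i _ => hxne i) this
  -- products of eigenvalues are all distinct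
  have hLaminj : Function.Injective Lam := by
    intro f g h
    have hfg := hdistinct (fun i => lam i (f i)) (fun i => lam i (g i))
      (fun i => ⟨u i (f i), hu_ne i (f i), hu_eig i (f i)⟩)
      (fun i => ⟨u i (g i), hu_ne i (g i), hu_eig i (g i)⟩) h
    funext i
    exact hlaminj i (congrFun hfg i)
  -- U is a basis
  have hli : LinearIndependent ℝ U := by
    apply Module.End.eigenvectors_linearIndependent' (Matrix.mulVecLin A) Lam hLaminj U
    intro f
    refine ⟨Module.End.mem_eigenspace_iff.2 ?_, hU_ne f⟩
    simpa [Matrix.mulVecLin_apply] using hU_eig f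
  have hcard : Fintype.card ιT = Module.finrank ℝ (ιT → ℝ) := by
    rw [Module.finrank_pi]
  set B := basisOfLinearIndependentOfCardEqFinrank hli hcard with hB
  have hBU : ⇑B = U := coe_basisOfLinearIndependentOfCardEqFinrank hli hcard
  -- key: every eigenvector is a nonzero multiple of a single U f
  have hkey : ∀ (μ : ℝ) (v : ιT → ℝ), v ≠ 0 → A.mulVec v = μ • v →
      ∃ (f : ιT) (c : ℝ), c ≠ 0 ∧ Lam f = μ ∧ v = c • U f := by
    intro μ v hv hAv
    set c := fun f => B.repr v f with hc
    have hvsum : v = ∑ f, c f • U f := by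
      conv_lhs => rw [← B.sum_repr v]
      exact Finset.sum_congr rfl fun f _ => by rw [hBU]
    have hcoef : ∀ f, (Lam f - μ) * c f = 0 := by
      have h1 : A.mulVec v = ∑ f, (c f * Lam f) • U f := by
        have : A.mulVec v = A.mulVecLin v := rfl
        rw [this, hvsum, _root_.map_sum]
        refine Finset.sum_congr rfl fun f _ => ?_
        rw [_root_.map_smul, Matrix.mulVecLin_apply, hU_eig f, smul_smul]
      have h2 : μ • v = ∑ f, (μ * c f) • U f := by
        rw [hvsum, Finset.smul_sum]
        exact Finset.sum_congr rfl fun f _ => by rw [smul_smul]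
      have h3 : ∑ f, ((c f * Lam f - μ * c f) • U f) = 0 := by
        have := hAv
        rw [h1, h2] at this
        rw [← sub_eq_zero] at this
        rw [← this, ← Finset.sum_sub_distrib]
        exact Finset.sum_congr rfl fun f _ => by rw [sub_smul]
      intro f
      have := Fintype.linearIndependent_iff.1 hli (fun f => c f * Lam f - μ * c f) h3 f
      linarith [this]
    obtain ⟨f₀, hf₀⟩ : ∃ f₀, c f₀ ≠ 0 := by
      by_contra hcon
      push_neg at hcon
      apply hv
      rw [hvsum]
      exact Finset.sum_eq_zero fun f _ => by rw [hcon f, zero_smul]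
    have hμ : Lam f₀ = μ := by
      have := hcoef f₀
      rcases mul_eq_zero.1 this with h | h
      · linarith
      · exact absurd h hf₀
    refine ⟨f₀, c f₀, hf₀, hμ, ?_⟩
    rw [hvsum]
    refine Finset.sum_eq_single f₀ ?_ ?_
    · intro f _ hne
      have := hcoef f
      rcases mul_eq_zero.1 this with h | h
      · exfalso
        apply hne
        apply hLaminj
        rw [hμ]; linarith
      · rw [h, zero_smul]
    · intro h; exact absurd (Finset.mem_univ f₀) h
  constructor
  · -- simplicity
    intro μ v w hv hAv hAw
    by_cases hw : w = 0
    · exact ⟨0, by rw [hw, zero_smul]⟩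
    obtain ⟨f, c, hc, hfμ, hvc⟩ := hkey μ v hv hAv
    obtain ⟨g, d, hd, hgμ, hwd⟩ := hkey μ w hw hAw
    have hfg : f = g := hLaminj (by rw [hfμ, hgμ])
    refine ⟨d / c, ?_⟩
    rw [hwd, hvc, ← hfg, smul_smul, div_mul_cancel₀ d hc]
  · -- flatness
    intro μ v hv hAv
    obtain ⟨f, c, hc, hfμ, hvc⟩ := hkey μ v hv hAv
    have hflat : ∀ i, ∃ (ci : ℝ) (si : Fin (nsz i) → ℝ),
        (∀ x, si x = 1 ∨ si x = -1) ∧ u i (f i) = ci • si := fun i =>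
      (hmix i).2 (lam i (f i)) (u i (f i)) (hu_ne i (f i)) (hu_eig i (f i))
    choose cc ss hss hcs using hflat
    refine ⟨c * ∏ i, cc i, fun x => ∏ i, ss i (x i), ?_, ?_⟩
    · intro x
      have hsq : (∏ i, ss i (x i)) * (∏ i, ss i (x i)) = 1 := by
        rw [← Finset.prod_mul_distrib]
        apply Finset.prod_eq_one
        intro i _
        rcases hss i (x i) with h | h <;> rw [h] <;> ring
      exact mul_self_eq_one_iff.1 hsq
    · funext x
      have hUx : U f x = (∏ i, cc i) * ∏ i, ss i (x i) := by
        simp only [hU]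
        rw [← Finset.prod_mul_distrib]
        exact Finset.prod_congr rfl fun i _ => by rw [hcs i]; rfl
      rw [hvc]
      simp only [Pi.smul_apply, smul_eq_mul]
      rw [hUx]; ring
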